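/- Chebyshev Jacobian-error polynomial bound (polynomial core of Theorem 3.5): Let 0 < ℓ < L, κ = ℓ/L, ξ = (1-√κ)/(1+√κ), t ≥ 1 a natural number, and define Cₜ(λ) = Tₜ(m(λ))/Tₜ(m(0)) with m(λ) = (2λ - L - ℓ)/(L - ℓ). Then for every λ ∈ [ℓ, L], |Cₜ(λ) - λ · Cₜ'(λ)| ≤ (2/(ξ^t + ξ^(-t))) · |2t²/(1-κ) - 1|, where Cₜ' denotes the derivative of Cₜ. -/

import Mathlib

open Polynomial

open Polynomial.Chebyshev


lemma absT_le (n : ℤ) {x : ℝ} (hx : |x| ≤ 1) : |(T ℝ n).eval x| ≤ 1 := by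
  obtain ⟨h1, h2⟩ := abs_le.mp hx
  rw [← Real.cos_arccos h1 h2, T_real_cos]
  exact Real.abs_cos_le_one _

lemma absU_le (n : ℕ) {x : ℝ} (hx : |x| ≤ 1) : |(U ℝ (n : ℤ)).eval x| ≤ (n : ℝ) + 1 := by
  induction n with
  | zero => simp
  | succ k ih =>
    have h := congrArg (Polynomial.eval x) (T_eq_U_sub_X_mul_U ℝ ((k : ℤ) + 1))
    simp only [eval_sub, eval_mul, eval_X] at h
    have hU : (U ℝ ((k : ℤ) + 1)).eval x
        = (T ℝ ((k : ℤ) + 1)).eval x + x * (U ℝ ((k : ℤ) + 1 - 1)).eval x := by linarith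
    push_cast
    rw [hU]
    simp only [add_sub_cancel_right]
    calc |(T ℝ ((k:ℤ)+1)).eval x + x * (U ℝ (k:ℤ)).eval x|
        ≤ |(T ℝ ((k:ℤ)+1)).eval x| + |x| * |(U ℝ (k:ℤ)).eval x| := by
          rw [← abs_mul]; exact abs_add_le _ _
      _ ≤ 1 + 1 * ((k:ℝ) + 1) := by
          exact add_le_add (absT_le _ hx)
            (mul_le_mul hx ih (abs_nonneg _) zero_le_one)
      _ = (k:ℝ) + 1 + 1 := by ring

lemma absU_le_int (n : ℤ) (hn : -1 ≤ n) {x : ℝ} (hx : |x| ≤ 1) :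
    |(U ℝ n).eval x| ≤ (n : ℝ) + 1 := by
  rcases eq_or_lt_of_le hn with h | h
  · rw [← h]; simp
  · lift n to ℕ using (by omega)
    exact_mod_cast absU_le n hx

lemma T_eval_avg (y : ℝ) (hy : y ≠ 0) : ∀ n : ℕ,
    (T ℝ (n : ℤ)).eval ((y + y⁻¹) / 2) = (y ^ n + y⁻¹ ^ n) / 2
  | 0 => by simp
  | 1 => by simp
  | (n + 2) => by
    have h1 := T_eval_avg y hy n
    have h2 := T_eval_avg y hy (n + 1)
    have h := congrArg (Polynomial.eval ((y + y⁻¹) / 2)) (T_add_two ℝ (n : ℤ))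
    simp only [eval_sub, eval_mul, eval_X, eval_ofNat] at h
    push_cast at h2 ⊢
    rw [h, h2, h1]
    field_simp
    have hyy : y * y⁻¹ = 1 := mul_inv_cancel₀ hy
    linear_combination (y * y⁻¹ ^ n - y⁻¹ * y⁻¹ ^ n) * hyy

lemma key_ident (n : ℤ) :
    X * derivative (T ℝ n) - T ℝ n
      = ((n : ℝ[X]) - 1) * (X * U ℝ (n - 1)) + U ℝ (n - 2) := by
  rw [T_derivative_eq_U, T_eq_U_sub_X_mul_U ℝ n]
  linear_combination -U_sub_two ℝ n

/-- Chebyshev Jacobian-error polynomial bound (polynomial core of Theorem 3.5):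
for the shifted normalized Chebyshev residual polynomial `Cₜ`, on `[ℓ, L]` one has
`|Cₜ(λ) - λ Cₜ'(λ)| ≤ (2/(ξ^t + ξ^(-t))) · |2t²/(1-κ) - 1|`. -/
theorem chebyshev_jacobian_error_poly_bound (ℓ L κ ξ : ℝ) (hℓ : 0 < ℓ) (hℓL : ℓ < L)
    (hκ : κ = ℓ / L) (hξ : ξ = (1 - Real.sqrt κ) / (1 + Real.sqrt κ))
    (t : ℕ) (ht : 1 ≤ t)
    (Ct : Polynomial ℝ)
    (hCt : Ct = Polynomial.C (((Polynomial.Chebyshev.T ℝ (t : ℤ)).eval (-(L + ℓ) / (L - ℓ)))⁻¹) *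
        (Polynomial.Chebyshev.T ℝ (t : ℤ)).comp
          (Polynomial.C (2 / (L - ℓ)) * Polynomial.X - Polynomial.C ((L + ℓ) / (L - ℓ)))) :
    ∀ lam ∈ Set.Icc ℓ L,
      |Ct.eval lam - lam * Ct.derivative.eval lam| ≤
        (2 / (ξ ^ t + ξ ^ (-(t : ℤ)))) * |2 * (t : ℝ) ^ 2 / (1 - κ) - 1| := by
  intro lam hlam
  obtain ⟨hl1, hl2⟩ := hlam
  have hL : (0:ℝ) < L := hℓ.trans hℓL
  have hd : (0:ℝ) < L - ℓ := sub_pos.mpr hℓL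
  have hκ0 : 0 < κ := by rw [hκ]; positivity
  have hκ1 : κ < 1 := by rw [hκ]; exact (div_lt_one hL).mpr hℓL
  set s := Real.sqrt κ with hs
  have hs0 : 0 < s := Real.sqrt_pos.mpr hκ0
  have hs1 : s < 1 := by
    rw [hs, show (1:ℝ) = Real.sqrt 1 by simp]
    exact Real.sqrt_lt_sqrt hκ0.le hκ1
  have hsq : s ^ 2 = κ := Real.sq_sqrt hκ0.le
  have hξ0 : 0 < ξ := by rw [hξ]; exact div_pos (by linarith) (by linarith)
  have ht1 : (1:ℝ) ≤ (t:ℝ) := by exact_mod_cast ht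
  set b : ℝ := (L + ℓ) / (L - ℓ) with hbdef
  have hb1 : 1 < b := by rw [hbdef, lt_div_iff₀ hd]; linarith
  have hκL : ℓ = κ * L := by rw [hκ]; field_simp
  have hbval : b = (ξ + ξ⁻¹) / 2 := by
    have h1 : (1:ℝ) + s ≠ 0 := by linarith
    have h2 : (1:ℝ) - s ≠ 0 := by linarith
    rw [hbdef, hξ, hκL, ← hsq]
    have h3 : L - s ^ 2 * L ≠ 0 := by nlinarith
    field_simp
    have h4 : (1 - s ^ 2) * (1 - s ^ 2)⁻¹ = 1 := mul_inv_cancel₀ (by nlinarith)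
    linear_combination (2 * (1 + s ^ 2)) * h4
  have hTnbval : (Chebyshev.T ℝ (t:ℤ)).eval (-b) = (-1:ℝ)^t * ((ξ ^ t + ξ⁻¹ ^ t)/2) := by
    have h := T_eval_avg (-ξ) (neg_ne_zero.mpr hξ0.ne') t
    rw [show ((-ξ) + (-ξ)⁻¹)/2 = -((ξ+ξ⁻¹)/2) by rw [inv_neg]; ring, ← hbval] at h
    rw [h, inv_neg, neg_pow ξ, neg_pow ξ⁻¹]
    ring
  have hP : 0 < (ξ ^ t + ξ⁻¹ ^ t)/2 := by positivity
  have habs : |(Chebyshev.T ℝ (t:ℤ)).eval (-b)| = (ξ ^ t + ξ⁻¹ ^ t)/2 := by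
    rw [hTnbval, abs_mul, abs_pow, abs_neg, abs_one, one_pow, one_mul, abs_of_pos hP]
  have hpt : -(L + ℓ) / (L - ℓ) = -b := by rw [hbdef]; ring
  set c : ℝ := ((Chebyshev.T ℝ (t:ℤ)).eval (-b))⁻¹ with hcdef
  set x : ℝ := 2/(L-ℓ) * lam - b with hxdef
  have hx_abs : |x| ≤ 1 := by
    rw [abs_le]
    constructor
    · rw [hxdef, hbdef]
      rw [show 2/(L-ℓ)*lam - (L+ℓ)/(L-ℓ) = (2*lam - (L+ℓ))/(L-ℓ) by ring]
      rw [le_div_iff₀ hd]; linarith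
    · rw [hxdef, hbdef]
      rw [show 2/(L-ℓ)*lam - (L+ℓ)/(L-ℓ) = (2*lam - (L+ℓ))/(L-ℓ) by ring]
      rw [div_le_one hd]; linarith
  have hCteval : Ct.eval lam = c * (Chebyshev.T ℝ (t:ℤ)).eval x := by
    rw [hCt]
    simp only [eval_mul, eval_C, eval_comp, eval_sub, eval_X, hpt, hcdef, hxdef, hbdef]
  have hderiv : Ct.derivative.eval lam
      = c * (2/(L-ℓ) * (derivative (Chebyshev.T ℝ (t:ℤ))).eval x) := by
    rw [hCt, derivative_C_mul, derivative_comp, derivative_sub, derivative_C_mul_X,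
      derivative_C, sub_zero]
    simp only [eval_mul, eval_C, eval_comp, eval_sub, eval_X, hpt, hcdef, hxdef, hbdef]
  set dTx : ℝ := (derivative (Chebyshev.T ℝ (t:ℤ))).eval x with hdTxdef
  have hU1 : |(Chebyshev.U ℝ ((t:ℤ)-1)).eval x| ≤ (t:ℝ) := by
    have h := absU_le_int ((t:ℤ)-1) (by omega) hx_abs
    push_cast at h; linarith
  have hdT : |dTx| ≤ (t:ℝ)^2 := by
    rw [hdTxdef, Chebyshev.T_derivative_eq_U]
    simp only [eval_mul, eval_intCast, eval_natCast, Int.cast_natCast]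
    rw [abs_mul, abs_of_nonneg (by positivity : (0:ℝ) ≤ (t:ℝ))]
    calc (t:ℝ) * |(Chebyshev.U ℝ ((t:ℤ)-1)).eval x| ≤ (t:ℝ) * (t:ℝ) := by
          exact mul_le_mul_of_nonneg_left hU1 (by positivity)
      _ = (t:ℝ)^2 := by ring
  have hkey : |x * dTx - (Chebyshev.T ℝ (t:ℤ)).eval x| ≤ (t:ℝ)^2 - 1 := by
    have h := congrArg (Polynomial.eval x) (key_ident (t:ℤ))
    simp only [eval_sub, eval_mul, eval_add, eval_X, eval_one, eval_intCast,
      eval_natCast, Int.cast_natCast] at h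
    rw [hdTxdef, h]
    have hU2 : |(Chebyshev.U ℝ ((t:ℤ)-2)).eval x| ≤ (t:ℝ) - 1 := by
      have h2 := absU_le_int ((t:ℤ)-2) (by omega) hx_abs
      push_cast at h2; linarith
    calc |((t:ℝ) - 1) * (x * (Chebyshev.U ℝ ((t:ℤ)-1)).eval x)
          + (Chebyshev.U ℝ ((t:ℤ)-2)).eval x|
        ≤ |((t:ℝ) - 1) * (x * (Chebyshev.U ℝ ((t:ℤ)-1)).eval x)|
          + |(Chebyshev.U ℝ ((t:ℤ)-2)).eval x| := abs_add_le _ _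
      _ ≤ ((t:ℝ) - 1) * (1 * (t:ℝ)) + ((t:ℝ) - 1) := by
          apply add_le_add _ hU2
          rw [abs_mul, abs_mul]
          apply mul_le_mul _ _ (by positivity) (by linarith)
          · rw [abs_of_nonneg (by linarith : (0:ℝ) ≤ (t:ℝ) - 1)]
          · exact mul_le_mul hx_abs hU1 (abs_nonneg _) zero_le_one
      _ = (t:ℝ)^2 - 1 := by ring
  have hxb : 2/(L-ℓ) * lam = x + b := by rw [hxdef]; ring
  have hmain : Ct.eval lam - lam * Ct.derivative.eval lam
      = c * (((Chebyshev.T ℝ (t:ℤ)).eval x - x * dTx) - b * dTx) := by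
    rw [hCteval, hderiv]
    linear_combination (-(c * dTx)) * hxb
  clear_value s b c x dTx
  have h1b : 1 + b = 2 / (1 - κ) := by
    have hne : (1:ℝ) - κ ≠ 0 := by linarith
    rw [hbdef, hκ]
    field_simp
    ring
  have hzpow : ξ ^ (-(t:ℤ)) = ξ⁻¹ ^ t := by
    rw [zpow_neg, zpow_natCast, inv_pow]
  have hrhs1 : 2 * (t:ℝ)^2 / (1 - κ) = (1 + b) * (t:ℝ)^2 := by
    rw [h1b]; ring
  have ht2 : (1:ℝ) ≤ (t:ℝ)^2 := by
    rw [show (1:ℝ) = 1^2 by norm_num]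
    exact pow_le_pow_left₀ zero_le_one ht1 2
  have hpos2 : (0:ℝ) ≤ (1 + b) * (t:ℝ)^2 - 1 := by
    have h2 : (2:ℝ) * 1 ≤ (1 + b) * (t:ℝ)^2 :=
      mul_le_mul (by linarith) ht2 zero_le_one (by linarith)
    linarith
  have hcabs : |c| = 2 / (ξ ^ t + ξ⁻¹ ^ t) := by
    rw [hcdef, abs_inv, habs, inv_div]
  rw [hmain, abs_mul, hzpow, hrhs1, abs_of_nonneg hpos2, hcabs]
  have hinner : |((Chebyshev.T ℝ (t:ℤ)).eval x - x * dTx) - b * dTx|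
      ≤ (1 + b) * (t:ℝ)^2 - 1 := by
    calc |((Chebyshev.T ℝ (t:ℤ)).eval x - x * dTx) - b * dTx|
        ≤ |(Chebyshev.T ℝ (t:ℤ)).eval x - x * dTx| + |b * dTx| := abs_sub _ _
      _ ≤ ((t:ℝ)^2 - 1) + b * (t:ℝ)^2 := by
          apply add_le_add
          · rw [abs_sub_comm]; exact hkey
          · rw [abs_mul, abs_of_pos (by linarith : (0:ℝ) < b)]
            exact mul_le_mul_of_nonneg_left hdT (by linarith)
      _ = (1 + b) * (t:ℝ)^2 - 1 := by ring
  exact mul_le_mul_of_nonneg_left hinner (by positivity)
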